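/- The RSK correspondence is a bijection between permutations of [m] and pairs (P, Q) of standard Young tableaux with entries [m] having the same shape. -/

import Mathlib

/-- Row-insert `x` into a single row: either append at the end, or bump the
smallest entry greater than `x`. Returns the new row and the bumped value. -/
def insertInRow (row : List ℕ) (x : ℕ) : List ℕ × Option ℕ :=
  match row.findIdx? (fun y => decide (x < y)) with
  | none => (row ++ [x], none)
  | some i => (row.set i x, row[i]?)

/-- RSK row-insertion (bumping) of `x` into a tableau given as its list of rows. -/
def rowInsertT : List (List ℕ) → ℕ → List (List ℕ)
  | [], x => [[x]]
  | r :: rs, x =>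
    match insertInRow r x with
    | (r', none) => r' :: rs
    | (r', some y) => r' :: rowInsertT rs y

/-- The shape of a tableau: the list of its row lengths. -/
def shapeT (T : List (List ℕ)) : List ℕ := T.map List.length

/-- The number of columns of a tableau: the length of its first row. -/
def numCols (T : List (List ℕ)) : ℕ := (T.getD 0 []).length

/-- The insertion tableau `P` of a word, built by successive row-insertions. -/
def rskP (l : List ℕ) : List (List ℕ) := l.foldl rowInsertT []

/-- The index of the row in which row-inserting `x` into `T` creates a new box. -/
def newBoxRow (T : List (List ℕ)) (x : ℕ) : ℕ :=
  (List.range (rowInsertT T x).length).findIdx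
    (fun i => decide ((T.getD i []).length < ((rowInsertT T x).getD i []).length))

/-- The (row, column) position (0-indexed) of the new box created by
row-inserting `x` into `T`. -/
def newBox (T : List (List ℕ)) (x : ℕ) : ℕ × ℕ :=
  (newBoxRow T x, ((rowInsertT T x).getD (newBoxRow T x) []).length - 1)

/-- One step of the full RSK algorithm on the pair `(P, Q)`: insert the value
`xi.1` into `P` and record the label `xi.2` in `Q` at the newly created box. -/
def rskStep (PQ : List (List ℕ) × List (List ℕ)) (xi : ℕ × ℕ) :
    List (List ℕ) × List (List ℕ) :=
  let r := newBoxRow PQ.1 xi.1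
  (rowInsertT PQ.1 xi.1,
    if r < PQ.2.length then PQ.2.set r (PQ.2.getD r [] ++ [xi.2]) else PQ.2 ++ [[xi.2]])

/-- The RSK pair `(P, Q)` of a word (the `i`-th letter gets recording label `i`). -/
def rskPQ (l : List ℕ) : List (List ℕ) × List (List ℕ) :=
  (l.zip (List.range' 1 l.length)).foldl rskStep ([], [])

/-- `T` is a standard Young tableau with entries `{1, …, m}`, given as its list of
rows: no empty rows, weakly decreasing row lengths, rows strictly increasing left
to right, columns strictly increasing top to bottom, and the entries are exactly
`1, …, m`. -/
def isSYT (m : ℕ) (T : List (List ℕ)) : Prop :=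
  [] ∉ T ∧
  List.Chain' (fun a b => b.length ≤ a.length) T ∧
  (∀ r ∈ T, List.Chain' (· < ·) r) ∧
  (∀ i j : ℕ, j < (T.getD (i + 1) []).length →
      (T.getD i []).getD j 0 < (T.getD (i + 1) []).getD j 0) ∧
  T.flatten.Perm (List.range' 1 m)

/-- The one-line word of a permutation of `Fin m`, with values in `{1, …, m}`. -/
def permList {m : ℕ} (π : Equiv.Perm (Fin m)) : List ℕ :=
  (List.finRange m).map (fun i => (π i : ℕ) + 1)


namespace RSK

/-- Strictly increasing row. -/
abbrev Srt (r : List ℕ) : Prop := List.Chain' (· < ·) r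

/-- Column compatibility between a row and the row below it. -/
def colOK (a b : List ℕ) : Prop :=
  b.length ≤ a.length ∧ ∀ j < b.length, a.getD j 0 < b.getD j 0

/-- Structural tableau predicate (nonempty sorted rows, compatible columns). -/
def Tab : List (List ℕ) → Prop
  | [] => True
  | row :: rs => row ≠ [] ∧ Srt row ∧ colOK row (rs.getD 0 []) ∧ Tab rs

def bumpRow : List (List ℕ) → ℕ → ℕ
  | [], _ => 0
  | r :: rs, x =>
    match insertInRow r x with
    | (_, none) => 0
    | (_, some y) => bumpRow rs y + 1

/-- basic getD lemmas -/
lemma getD_mem {l : List ℕ} {j : ℕ} (h : j < l.length) : l.getD j 0 ∈ l := by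
  rw [List.getD_eq_getElem l 0 h]; exact List.getElem_mem h

lemma srt_getD_lt {row : List ℕ} (h : Srt row) {i j : ℕ} (hij : i < j)
    (hj : j < row.length) : row.getD i 0 < row.getD j 0 := by
  rw [List.getD_eq_getElem row 0 (hij.trans hj), List.getD_eq_getElem row 0 hj]
  exact List.pairwise_iff_getElem.1 (List.isChain_iff_pairwise.1 h) i j (hij.trans hj) hj hij

lemma srt_getD_le {row : List ℕ} (h : Srt row) {i j : ℕ} (hij : i ≤ j)
    (hj : j < row.length) : row.getD i 0 ≤ row.getD j 0 := by
  rcases hij.lt_or_eq with h' | rfl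
  · exact (srt_getD_lt h h' hj).le
  · exact le_rfl

lemma srt_nodup {row : List ℕ} (h : Srt row) : row.Nodup :=
  (List.isChain_iff_pairwise.1 h).imp ne_of_lt

/-- Case analysis for `insertInRow` on an arbitrary row. -/
lemma insertInRow_cases (row : List ℕ) (x : ℕ) :
    (insertInRow row x = (row ++ [x], none) ∧ ∀ z ∈ row, ¬ x < z) ∨
    (∃ i, i < row.length ∧ insertInRow row x = (row.set i x, some (row.getD i 0)) ∧
      x < row.getD i 0 ∧ ∀ j < i, ¬ x < row.getD j 0) := by
  unfold insertInRow
  rcases h : row.findIdx? (fun y => decide (x < y)) with _ | i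
  · left
    refine ⟨rfl, fun z hz => ?_⟩
    have := List.findIdx?_eq_none_iff.1 h z hz
    simpa using this
  · right
    obtain ⟨hi, hfi⟩ := List.findIdx?_eq_some_iff_findIdx_eq.1 h
    refine ⟨i, hi, ?_, ?_, ?_⟩
    · simp [List.getElem?_eq_getElem hi, List.getD_eq_getElem row 0 hi]
    · have := (List.findIdx_eq hi).1 hfi
      rw [List.getD_eq_getElem row 0 hi]
      simpa using this.1
    · intro j hj
      have hjl : j < row.length := hj.trans hi
      have := ((List.findIdx_eq hi).1 hfi).2 j hj
      rw [List.getD_eq_getElem row 0 hjl]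
      simpa using this

/-- Setting a value in a sorted row keeps it sorted, given two-sided bounds. -/
lemma srt_set {row : List ℕ} (h : Srt row) {i x : ℕ} (hi : i < row.length)
    (hlow : ∀ j < i, row.getD j 0 < x)
    (hhigh : ∀ j, i < j → j < row.length → x < row.getD j 0) :
    Srt (row.set i x) := by
  rw [Srt, List.Chain', List.isChain_iff_pairwise, List.pairwise_iff_getElem] at *
  intro a b ha hb hab
  rw [List.length_set] at ha hb
  rw [List.getElem_set, List.getElem_set]
  by_cases hia : i = a
  · subst hia
    simp only [if_pos rfl, if_neg hab.ne]
    have := hhigh b hab hb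
    rwa [List.getD_eq_getElem row 0 hb] at this
  · by_cases hib : i = b
    · subst hib
      simp only [if_neg hia, if_pos rfl]
      have := hlow a hab
      rwa [List.getD_eq_getElem row 0 ha] at this
    · simp only [if_neg hia, if_neg hib]
      exact h a b ha hb hab

lemma srt_concat {row : List ℕ} (h : Srt row) {x : ℕ} (hx : ∀ z ∈ row, z < x) :
    Srt (row ++ [x]) := by
  rw [Srt, List.Chain', List.isChain_iff_pairwise] at *
  rw [List.pairwise_append]
  exact ⟨h, List.pairwise_singleton _ _, fun a ha b hb => by
    simp only [List.mem_singleton] at hb; subst hb; exact hx a ha⟩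

lemma perm_set {L : List ℕ} {i : ℕ} (hi : i < L.length) (v : ℕ) :
    (L.set i v ++ [L.getD i 0]).Perm (v :: L) := by
  induction L generalizing i with
  | nil => simp at hi
  | cons a l ih =>
    cases i with
    | zero =>
      simp only [List.set_cons_zero, List.getD_cons_zero, List.cons_append]
      exact (List.perm_append_singleton a l).cons v
    | succ n =>
      simp only [List.set_cons_succ, List.getD_cons_succ, List.cons_append]
      have h1 := (ih (by simpa using hi)).cons a
      exact h1.trans (List.Perm.swap v a l)

lemma set_getD_self (L : List ℕ) (i : ℕ) : L.set i (L.getD i 0) = L := by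
  apply List.ext_getElem?
  intro n
  rw [List.getElem?_set]
  by_cases h : i = n
  · subst h
    by_cases h2 : i < L.length
    · simp [h2, List.getD_eq_getElem L 0 h2, List.getElem?_eq_getElem h2]
    · simp [h2, List.getElem?_eq_none (show L.length ≤ i by omega)]
  · simp [h]

lemma head_ins (T : List (List ℕ)) (x : ℕ) :
    (rowInsertT T x).getD 0 [] = (insertInRow (T.getD 0 []) x).1 := by
  cases T with
  | nil => simp [rowInsertT, insertInRow]
  | cons row rs =>
    rcases h : insertInRow row x with ⟨r', o⟩
    cases o <;> simp [rowInsertT, h, List.getD_cons_zero]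

lemma ins_ne_nil (T : List (List ℕ)) (x : ℕ) : rowInsertT T x ≠ [] := by
  cases T with
  | nil => simp [rowInsertT]
  | cons row rs =>
    rcases h : insertInRow row x with ⟨r', o⟩
    cases o <;> simp [rowInsertT, h]

lemma getD_ne_nil {L : List (List ℕ)} {i : ℕ} (h : L.getD i [] ≠ []) : i < L.length := by
  by_contra hc
  push_neg at hc
  rw [List.getD_eq_getElem?_getD, List.getElem?_eq_none (by omega)] at h
  simp at h

/-- every entry strictly below the first row exceeds the first entry of the first row -/
lemma gt_head : ∀ (row : List ℕ) (rs : List (List ℕ)), Tab (row :: rs) →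
    ∀ z ∈ rs.flatten, row.getD 0 0 < z := by
  intro row rs
  induction rs generalizing row with
  | nil => intro _ z hz; simp at hz
  | cons r1 rs' ih =>
    intro h z hz
    obtain ⟨hne, hsrt, hcol, htab⟩ := h
    simp only [List.getD_cons_zero] at hcol
    obtain ⟨hr1ne, hr1srcons, hcol1, htab'⟩ := htab
    have hr1len : 0 < r1.length := List.length_pos_iff.2 hr1ne
    simp only [List.flatten_cons, List.mem_append] at hz
    rcases hz with hz | hz
    · obtain ⟨j, hj, rfl⟩ := List.mem_iff_getElem.1 hz
      have h1 : row.getD 0 0 ≤ row.getD j 0 := srt_getD_le hsrt (Nat.zero_le j) (hj.trans_le hcol.1)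
      have h2 : row.getD j 0 < r1.getD j 0 := hcol.2 j hj
      rw [List.getD_eq_getElem r1 0 hj] at h2
      exact h1.trans_lt h2
    · have h1 : row.getD 0 0 < r1.getD 0 0 := hcol.2 0 hr1len
      have h2 : r1.getD 0 0 < z := ih r1 ⟨hr1ne, hr1srcons, hcol1, htab'⟩ z hz
      exact h1.trans h2



lemma getD_set_ne (L : List ℕ) (i x j : ℕ) (h : i ≠ j) :
    (L.set i x).getD j 0 = L.getD j 0 := by
  rw [List.getD_eq_getElem?_getD, List.getD_eq_getElem?_getD, List.getElem?_set, if_neg h]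

lemma getD_set_self {L : List ℕ} {i : ℕ} (h : i < L.length) (x : ℕ) :
    (L.set i x).getD i 0 = x := by
  rw [List.getD_eq_getElem?_getD, List.getElem?_set, if_pos rfl, if_pos h]
  rfl

lemma set_ne_nil {row : List ℕ} (h : row ≠ []) (i x : ℕ) : row.set i x ≠ [] := by
  cases row with
  | nil => exact absurd rfl h
  | cons a l => cases i <;> simp

lemma getD_concat_self (l : List ℕ) (x : ℕ) : (l ++ [x]).getD l.length 0 = x := by
  rw [List.getD_eq_getElem?_getD, List.getElem?_concat_length]
  rfl

lemma tab_head_srt {rs : List (List ℕ)} (h : Tab rs) : Srt (rs.getD 0 []) := by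
  cases rs with
  | nil => simp [Srt, List.Chain']
  | cons r1 rs' => exact h.2.1

lemma srt_of_getD_eq {a b : List ℕ} (h : a = b) (hs : Srt a) : Srt b := h ▸ hs

lemma ins_spec : ∀ (T : List (List ℕ)) (x : ℕ), Tab T → T.flatten.Nodup → x ∉ T.flatten →
    Tab (rowInsertT T x) ∧
    (rowInsertT T x).flatten.Perm (x :: T.flatten) ∧
    (∀ i, ((rowInsertT T x).getD i []).length
        = (T.getD i []).length + (if i = bumpRow T x then 1 else 0)) ∧
    (rowInsertT T x).length = T.length + (if bumpRow T x = T.length then 1 else 0) ∧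
    bumpRow T x ≤ T.length
  | [], x, _, _, _ => by
    refine ⟨⟨by simp, by simp [Srt, List.Chain'], ⟨by simp, by simp⟩, trivial⟩, by simp [rowInsertT], ?_, ?_, ?_⟩
    · intro i
      cases i <;> simp [rowInsertT, bumpRow]
    · simp [rowInsertT, bumpRow]
    · simp [bumpRow]
  | row :: rs, x, hT, hnd, hx => by
    obtain ⟨hne, hsrt, hcol, htab⟩ := hT
    rw [List.flatten_cons, List.nodup_append] at hnd
    obtain ⟨hndrow, hndrs, hdisj⟩ := hnd
    rw [List.flatten_cons, List.mem_append, not_or] at hx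
    obtain ⟨hxrow, hxrs⟩ := hx
    rcases insertInRow_cases row x with ⟨hcase, hgt⟩ | ⟨i, hi, hcase, hxlt, hlow⟩
    · -- append-at-end case
      have hins : rowInsertT (row :: rs) x = (row ++ [x]) :: rs := by
        simp only [rowInsertT, hcase]
      have hb : bumpRow (row :: rs) x = 0 := by
        simp only [bumpRow, hcase]
      have hltx : ∀ z ∈ row, z < x := fun z hz =>
        lt_of_le_of_ne (not_lt.1 (hgt z hz)) (fun he => hxrow (he ▸ hz))
      refine ⟨?_, ?_, ?_, ?_, ?_⟩
      · rw [hins]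
        exact ⟨by simp, srt_concat hsrt hltx,
          ⟨hcol.1.trans (by simp), fun j hj => by
            rw [List.getD_append _ _ _ _ (hj.trans_le hcol.1)]; exact hcol.2 j hj⟩, htab⟩
      · rw [hins, List.flatten_cons, List.flatten_cons, ← List.cons_append]
        exact (List.perm_append_singleton x row).append_right rs.flatten
      · intro i
        rw [hins, hb]
        cases i with
        | zero => simp
        | succ n => simp
      · rw [hins, hb]
        simp
      · rw [hb]; simp
    · -- bumping case
      set y := row.getD i 0 with hy
      have hins : rowInsertT (row :: rs) x = row.set i x :: rowInsertT rs y := by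
        simp only [rowInsertT, hcase]
      have hb : bumpRow (row :: rs) x = bumpRow rs y + 1 := by
        simp only [bumpRow, hcase]
      have hyrow : y ∈ row := getD_mem hi
      have hyrs : y ∉ rs.flatten := fun h => hdisj _ hyrow _ h rfl
      obtain ⟨IH1, IH2, IH3, IH4, IH5⟩ := ins_spec rs y htab hndrs hyrs
      have hlow' : ∀ j < i, row.getD j 0 < x := fun j hj =>
        lt_of_le_of_ne (not_lt.1 (hlow j hj)) (fun he => hxrow (he ▸ getD_mem (hj.trans hi)))
      have hsrt' : Srt (row.set i x) :=
        srt_set hsrt hi hlow' (fun j hij hj => hxlt.trans_le (srt_getD_le hsrt hij.le hj))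
      have hcolOK : colOK (row.set i x) ((rowInsertT rs y).getD 0 []) := by
        rw [head_ins]
        have hsrt0 : Srt (rs.getD 0 []) := tab_head_srt htab
        rcases insertInRow_cases (rs.getD 0 []) y with ⟨hc2, hgt2⟩ | ⟨q, hq, hc2, hylt2, hlow2⟩
        · rw [hc2]
          have key : (rs.getD 0 []).length ≤ i := by
            by_contra hcon
            push_neg at hcon
            exact hgt2 _ (getD_mem hcon) (hcol.2 i hcon)
          constructor
          · simp only [List.length_append, List.length_singleton, List.length_set]
            omega
          · intro j hj
            simp only [List.length_append, List.length_singleton] at hj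
            rcases Nat.lt_or_ge j (rs.getD 0 []).length with hj' | hj'
            · rw [List.getD_append _ _ _ _ hj', getD_set_ne _ _ _ _ (by omega)]
              exact hcol.2 j hj'
            · have hjeq : j = (rs.getD 0 []).length := by omega
              rw [hjeq, getD_concat_self]
              rcases eq_or_ne (rs.getD 0 []).length i with he | hne2
              · rw [he, getD_set_self hi]; exact hxlt
              · have hji : (rs.getD 0 []).length < i := by omega
                rw [getD_set_ne _ _ _ _ (Ne.symm hne2)]
                exact srt_getD_lt hsrt hji hi
        · rw [hc2]
          have hql : q ≤ i := by
            by_contra hcon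
            push_neg at hcon
            have hi0 : i < (rs.getD 0 []).length := hcon.trans_le hq.le
            exact hlow2 i hcon (hcol.2 i hi0)
          constructor
          · simpa using hcol.1
          · intro j hj
            simp only [List.length_set] at hj
            rcases eq_or_ne j i with rfl | hne2
            · rw [getD_set_self hi]
              rcases eq_or_ne q j with rfl | hqne
              · rw [getD_set_self hq]; exact hxlt
              · have hqj : q < j := lt_of_le_of_ne hql hqne
                rw [getD_set_ne _ _ _ _ hqne]
                exact hxlt.trans (hylt2.trans_le (srt_getD_le hsrt0 hqj.le hj))
            · rw [getD_set_ne _ _ _ _ (Ne.symm hne2)]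
              rcases eq_or_ne q j with rfl | hqne
              · rw [getD_set_self hq]
                have hqi : q < i := lt_of_le_of_ne hql hne2
                exact (srt_getD_lt hsrt hqi hi)
              · rw [getD_set_ne _ _ _ _ hqne]
                exact hcol.2 j hj
      refine ⟨?_, ?_, ?_, ?_, ?_⟩
      · rw [hins]
        exact ⟨set_ne_nil hne i x, hsrt', hcolOK, IH1⟩
      · rw [hins, List.flatten_cons, List.flatten_cons]
        have p2 : (row.set i x ++ (rowInsertT rs y).flatten).Perm
            (row.set i x ++ (y :: rs.flatten)) := IH2.append_left _
        have p3 : (row.set i x ++ (y :: rs.flatten)).Perm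
            (y :: (row.set i x ++ rs.flatten)) := List.perm_middle
        have p0 : (y :: (row.set i x ++ rs.flatten)).Perm ((row.set i x ++ [y]) ++ rs.flatten) := by
          rw [List.append_assoc, List.singleton_append]
          exact List.perm_middle.symm
        have p1 : ((row.set i x ++ [y]) ++ rs.flatten).Perm ((x :: row) ++ rs.flatten) :=
          (perm_set hi x).append_right rs.flatten
        exact (p2.trans p3).trans (p0.trans p1)
      · intro i'
        rw [hins, hb]
        cases i' with
        | zero => simp
        | succ n =>
          simp only [List.getD_cons_succ]
          rw [IH3 n]
          split_ifs <;> omega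
      · rw [hins, hb]
        simp only [List.length_cons, IH4]
        split_ifs with h1 h2 h2 <;> omega
      · rw [hb]
        simp only [List.length_cons]
        omega


def unbumpRow (row : List ℕ) (y : ℕ) : List ℕ × ℕ :=
  ((row.set (row.findIdx (fun z => decide (y ≤ z)) - 1) y),
    row.getD (row.findIdx (fun z => decide (y ≤ z)) - 1) 0)

def delT : ℕ → List (List ℕ) → List (List ℕ) × ℕ
  | 0, T =>
    (if (T.headD []).length ≤ 1 then T.tail else (T.headD []).dropLast :: T.tail,
      (T.headD []).getLastD 0)
  | _ + 1, [] => ([], 0)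
  | r + 1, row :: rs =>
    ((unbumpRow row (delT r rs).2).1 :: (delT r rs).1, (unbumpRow row (delT r rs).2).2)

lemma mem_flatten_of_getD0 {L : List (List ℕ)} {z : ℕ} (h : z ∈ L.getD 0 []) :
    z ∈ L.flatten := by
  cases L with
  | nil => simp at h
  | cons a l => simp only [List.getD_cons_zero] at h; simp [List.flatten_cons, h]

lemma rt1 : ∀ (T : List (List ℕ)) (x : ℕ), Tab T → T.flatten.Nodup → x ∉ T.flatten →
    delT (bumpRow T x) (rowInsertT T x) = (T, x)
  | [], x, _, _, _ => by
    simp [rowInsertT, bumpRow, delT]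
  | row :: rs, x, hT, hnd, hx => by
    obtain ⟨hne, hsrt, hcol, htab⟩ := hT
    rw [List.flatten_cons, List.nodup_append] at hnd
    obtain ⟨hndrow, hndrs, hdisj⟩ := hnd
    rw [List.flatten_cons, List.mem_append, not_or] at hx
    obtain ⟨hxrow, hxrs⟩ := hx
    rcases insertInRow_cases row x with ⟨hcase, hgt⟩ | ⟨i, hi, hcase, hxlt, hlow⟩
    · have hins : rowInsertT (row :: rs) x = (row ++ [x]) :: rs := by
        simp only [rowInsertT, hcase]
      have hb : bumpRow (row :: rs) x = 0 := by simp only [bumpRow, hcase]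
      rw [hins, hb]
      have hrowlen : 0 < row.length := List.length_pos_iff.2 hne
      simp only [delT, List.headD_cons, List.tail_cons]
      simp only [List.length_append, List.length_singleton, show ¬ (row.length + 1 ≤ 1) by omega, ↓reduceIte]
      simp [List.dropLast_concat, List.getLastD_concat]
    · set y := row.getD i 0 with hy
      have hins : rowInsertT (row :: rs) x = row.set i x :: rowInsertT rs y := by
        simp only [rowInsertT, hcase]
      have hb : bumpRow (row :: rs) x = bumpRow rs y + 1 := by
        simp only [bumpRow, hcase]
      have hyrow : y ∈ row := getD_mem hi
      have hyrs : y ∉ rs.flatten := fun h => hdisj _ hyrow _ h rfl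
      have IH := rt1 rs y htab hndrs hyrs
      rw [hins, hb]
      simp only [delT]
      rw [IH]
      have hfalse : ∀ j, j < i + 1 → ∀ (hj : j < (row.set i x).length),
          (fun z => decide (y ≤ z)) (row.set i x)[j] = false := by
        intro j hji hj
        have hjr : j < row.length := by simpa using hj
        rw [List.getElem_set]
        simp only [decide_eq_false_iff_not, not_le]
        by_cases hji' : i = j
        · rw [if_pos hji']; exact hxlt
        · rw [if_neg hji']
          have hj' : j < i := by omega
          have h1 : ¬ x < row.getD j 0 := hlow j hj'
          rw [← List.getD_eq_getElem row 0 hjr]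
          exact (not_lt.1 h1).trans_lt hxlt
      have hfi : (row.set i x).findIdx (fun z => decide (y ≤ z)) = i + 1 := by
        have hlen : (row.set i x).length = row.length := List.length_set
        rcases lt_or_ge (i+1) row.length with h' | h'
        · rw [List.findIdx_eq (by omega : i + 1 < (row.set i x).length)]
          refine ⟨?_, fun j hj => hfalse j hj (by omega)⟩
          rw [List.getElem_set, if_neg (by omega)]
          simp only [decide_eq_true_eq]
          have := srt_getD_lt hsrt (Nat.lt_succ_self i) h'
          rw [← hy] at this
          rw [← List.getD_eq_getElem row 0 h']
          exact this.le
        · have h'' : i + 1 = row.length := by omega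
          refine le_antisymm ?_ ?_
          · have := List.findIdx_le_length (p := fun z => decide (y ≤ z)) (xs := row.set i x)
            omega
          · by_contra hc
            push_neg at hc
            have hlt : (row.set i x).findIdx (fun z => decide (y ≤ z)) < (row.set i x).length := by
              omega
            have h2 := hfalse _ (by omega) hlt
            have h3 := List.findIdx_getElem (w := hlt)
            simp only at h2 h3
            rw [h2] at h3
            exact Bool.noConfusion h3
      have hub : unbumpRow (row.set i x) y = (row, x) := by
        unfold unbumpRow
        rw [hfi]
        simp only [Nat.add_sub_cancel]
        rw [List.set_set, hy, set_getD_self, getD_set_self hi]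
      rw [hub]

lemma rt2 : ∀ (r : ℕ) (T : List (List ℕ)), Tab T → T.flatten.Nodup →
    (T.getD (r+1) []).length < (T.getD r []).length →
    Tab (delT r T).1 ∧
    T.flatten.Perm ((delT r T).2 :: (delT r T).1.flatten) ∧
    rowInsertT (delT r T).1 (delT r T).2 = T ∧
    bumpRow (delT r T).1 (delT r T).2 = r ∧
    (∀ i, ((delT r T).1.getD i []).length
        = (T.getD i []).length - (if i = r then 1 else 0)) ∧
    (delT r T).1.length = T.length - (if (T.getD r []).length ≤ 1 then 1 else 0)
  | 0, [], _, _, hr => by simp at hr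
  | 0, row :: rs, hT, hnd, hr => by
    obtain ⟨hne, hsrt, hcol, htab⟩ := hT
    rw [List.flatten_cons, List.nodup_append] at hnd
    obtain ⟨hndrow, hndrs, hdisj⟩ := hnd
    simp only [List.getD_cons_zero, List.getD_cons_succ] at hr
    have hrowlen : 0 < row.length := List.length_pos_iff.2 hne
    by_cases h1 : row.length ≤ 1
    · have hrow1 : row.length = 1 := by omega
      have hrs : rs = [] := by
        cases rs with
        | nil => rfl
        | cons r1 rs' =>
          exfalso
          have : r1.length = 0 := by simp [List.getD_cons_zero] at hr; omega
          exact htab.1 (List.length_eq_zero_iff.1 this)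
      obtain ⟨a, ha⟩ := List.length_eq_one_iff.1 hrow1
      subst ha hrs
      have hgl : [a].getLastD 0 = a := rfl
      simp only [delT, List.headD_cons, List.length_singleton, le_refl, if_pos, List.tail_cons, hgl]
      refine ⟨trivial, by simp, by simp [rowInsertT, insertInRow], by simp [bumpRow], ?_, by simp⟩
      intro i
      cases i <;> simp
    · simp only [delT, List.headD_cons, List.tail_cons, h1, ↓reduceIte]
      set x := row.getLastD 0 with hxdef
      have hxlast : x = row.getLast hne := by
        rw [hxdef, List.getLastD_eq_getLast?, List.getLast?_eq_getLast hne]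
        rfl
      have hsplit : row.dropLast ++ [x] = row := by
        rw [hxlast]; exact List.dropLast_append_getLast hne
      have hdllen : row.dropLast.length = row.length - 1 := List.length_dropLast
      have hdlget : ∀ j < row.dropLast.length, row.dropLast.getD j 0 = row.getD j 0 := by
        intro j hj
        rw [List.getD_eq_getElem _ 0 hj, List.getD_eq_getElem _ 0 (by omega : j < row.length),
          List.getElem_dropLast]
      have hdlsrt : Srt row.dropLast := hsrt.sublist (List.dropLast_sublist row)
      have hdllt : ∀ z ∈ row.dropLast, z < x := by
        have hpw := List.isChain_iff_pairwise.1 hsrt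
        rw [← hsplit, List.pairwise_append] at hpw
        intro z hz
        exact hpw.2.2 z hz x (by simp)
      have hinsrow : insertInRow row.dropLast x = (row.dropLast ++ [x], none) := by
        unfold insertInRow
        have : row.dropLast.findIdx? (fun z => decide (x < z)) = none := by
          rw [List.findIdx?_eq_none_iff]
          intro z hz
          simp [not_lt.2 (hdllt z hz).le]
        rw [this]
      refine ⟨?_, ?_, ?_, ?_, ?_, ?_⟩
      · refine ⟨?_, hdlsrt, ⟨by omega, ?_⟩, htab⟩
        · intro h
          rw [← List.length_eq_zero_iff] at h
          omega
        · intro j hj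
          rw [hdlget j (by omega)]
          exact hcol.2 j hj
      · rw [List.flatten_cons, List.flatten_cons]
        have h8 : row ++ rs.flatten = row.dropLast ++ (x :: rs.flatten) := by
          conv_lhs => rw [← hsplit]
          rw [List.append_assoc, List.singleton_append]
        rw [h8]
        exact List.perm_middle
      · rw [rowInsertT, hinsrow, hsplit]
      · rw [bumpRow, hinsrow]
      · intro i
        cases i with
        | zero =>
          simp only [List.getD_cons_zero, if_pos]
          omega
        | succ n => simp
      · simp only [List.length_cons, List.getD_cons_zero, if_neg h1]
        omega
  | r + 1, [], _, _, hr => by simp at hr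
  | r + 1, row :: rs, hT, hnd, hr => by
    obtain ⟨hne, hsrt, hcol, htab⟩ := hT
    have hndfull := hnd
    rw [List.flatten_cons, List.nodup_append] at hnd
    obtain ⟨hndrow, hndrs, hdisj⟩ := hnd
    simp only [List.getD_cons_succ] at hr
    obtain ⟨IH1, IHperm, IHins, IHbump, IHlen, IHlistlen⟩ := rt2 r rs htab hndrs hr
    set rs' := (delT r rs).1 with hrs'
    set y := (delT r rs).2 with hy
    have hymem : y ∈ rs.flatten := IHperm.mem_iff.2 List.mem_cons_self
    have hynodup : (y :: rs'.flatten).Nodup := IHperm.nodup_iff.1 hndrs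
    have hyrs' : y ∉ rs'.flatten := (List.nodup_cons.1 hynodup).1
    have hndrs' : rs'.flatten.Nodup := (List.nodup_cons.1 hynodup).2
    have hyrow : y ∉ row := fun h => hdisj _ h _ hymem rfl
    have h0 : row.getD 0 0 < y := gt_head row rs ⟨hne, hsrt, hcol, htab⟩ y hymem
    have hrowlen : 0 < row.length := List.length_pos_iff.2 hne
    set f := row.findIdx (fun z => decide (y ≤ z)) with hf
    have hflen : f ≤ row.length := List.findIdx_le_length
    have hf1 : 1 ≤ f := by
      by_contra hc
      push_neg at hc
      have hfz : List.findIdx (fun z => decide (y ≤ z)) row = 0 := by omega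
      have h3 := ((List.findIdx_eq (p := fun z => decide (y ≤ z)) hrowlen).1 hfz).1
      simp only [decide_eq_true_eq] at h3
      rw [← List.getD_eq_getElem row 0 hrowlen] at h3
      omega
    set i := f - 1 with hidef
    have hfi : f = i + 1 := by omega
    have hi : i < row.length := by omega
    have hlowf : ∀ j ≤ i, row.getD j 0 < y := by
      intro j hj
      have hjf : j < f := by omega
      have hjlen : j < row.length := by omega
      have := List.not_of_lt_findIdx (p := fun z => decide (y ≤ z)) (xs := row) (by omega : j < row.findIdx _)
      simp only [decide_eq_false_iff_not, not_le] at this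
      rwa [← List.getD_eq_getElem row 0 hjlen] at this
    have hhighf : ∀ j, i < j → j < row.length → y < row.getD j 0 := by
      intro j hij hjlen
      have hflt : f < row.length := by omega
      have h1 := List.findIdx_getElem (p := fun z => decide (y ≤ z)) (xs := row) (w := hflt)
      simp only [decide_eq_true_eq] at h1
      rw [← List.getD_eq_getElem row 0 hflt] at h1
      have h2 : row.getD f 0 ≤ row.getD j 0 := srt_getD_le hsrt (by omega) hjlen
      have h3 : y ≤ row.getD j 0 := h1.trans h2
      rcases h3.lt_or_eq with h4 | h4
      · exact h4
      · exact absurd (h4 ▸ getD_mem hjlen) hyrow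
    set x := row.getD i 0 with hxdef
    have hxy : x < y := hlowf i le_rfl
    have hub : unbumpRow row y = (row.set i y, x) := rfl
    have hdel : delT (r+1) (row :: rs) = (row.set i y :: rs', x) := by
      simp only [delT, ← hy, ← hrs', hub]
    rw [hdel]
    have hxrow : x ∈ row := getD_mem hi
    have hxfrs : x ∉ rs.flatten := fun h => hdisj _ hxrow _ h rfl
    -- column compatibility of the new first row with the head of rs'
    have hheadeq : rs.getD 0 [] = (insertInRow (rs'.getD 0 []) y).1 := by
      rw [← head_ins rs' y, IHins]
    have hsrt0' : Srt (rs'.getD 0 []) := tab_head_srt IH1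
    have hynot0 : y ∉ rs'.getD 0 [] := fun h => hyrs' (mem_flatten_of_getD0 h)
    have hcolOK : colOK (row.set i y) (rs'.getD 0 []) := by
      rcases insertInRow_cases (rs'.getD 0 []) y with ⟨hc2, hgt2⟩ | ⟨q, hq, hc2, hylt2, hlow2⟩
      · have hhead : rs.getD 0 [] = rs'.getD 0 [] ++ [y] := by rw [hheadeq, hc2]
        have hlen0 : (rs'.getD 0 []).length + 1 ≤ row.length := by
          have := hcol.1
          rw [hhead] at this
          simpa using this
        have key : (rs'.getD 0 []).length ≤ i := by
          by_contra hcon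
          push_neg at hcon
          have hjl : (rs'.getD 0 []).length < row.length := by omega
          have h5 := hcol.2 (rs'.getD 0 []).length
            (by rw [hhead, List.length_append, List.length_singleton]; omega)
          rw [hhead, getD_concat_self] at h5
          exact absurd h5 (not_lt.2 (hhighf _ hcon hjl).le)
        refine ⟨by rw [List.length_set]; omega, ?_⟩
        intro j hj
        have hjne : i ≠ j := by omega
        rw [getD_set_ne _ _ _ _ hjne]
        have h5 := hcol.2 j
          (by rw [hhead, List.length_append, List.length_singleton]; omega)
        rw [hhead, List.getD_append _ _ _ _ hj] at h5
        exact h5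
      · have hhead : rs.getD 0 [] = (rs'.getD 0 []).set q y := by rw [hheadeq, hc2]
        have hlen0 : (rs'.getD 0 []).length ≤ row.length := by
          have := hcol.1
          rw [hhead, List.length_set] at this
          exact this
        have hqi : q ≤ i := by
          by_contra hcon
          push_neg at hcon
          have h5 := hcol.2 q (by rw [hhead, List.length_set]; exact hq)
          rw [hhead, getD_set_self hq] at h5
          exact absurd h5 (not_lt.2 (hhighf q hcon (hq.trans_le hlen0)).le)
        refine ⟨by rw [List.length_set]; exact hlen0, ?_⟩
        intro j hj
        rcases eq_or_ne j i with heq | hne2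
        · rw [heq, getD_set_self hi]
          rcases eq_or_ne q i with heq2 | hqne
          · rw [← heq2]; exact hylt2
          · have hqj : q < i := by omega
            exact hylt2.trans (srt_getD_lt hsrt0' hqj (heq ▸ hj))
        · rw [getD_set_ne _ _ _ _ (Ne.symm hne2)]
          rcases eq_or_ne q j with heq2 | hqne
          · rw [← heq2]
            exact (hlowf q hqi).trans hylt2
          · have h5 := hcol.2 j (by rw [hhead, List.length_set]; exact hj)
            rw [hhead, getD_set_ne _ _ _ _ hqne] at h5
            exact h5
    have hinseq : insertInRow (row.set i y) x = (row, some y) := by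
      have hfind : (row.set i y).findIdx? (fun z => decide (x < z)) = some i := by
        rw [List.findIdx?_eq_some_iff_findIdx_eq]
        refine ⟨by simpa using hi, ?_⟩
        rw [List.findIdx_eq (by simpa using hi)]
        constructor
        · rw [List.getElem_set, if_pos rfl]
          simpa using hxy
        · intro j hj
          rw [List.getElem_set, if_neg (by omega)]
          simp only [decide_eq_false_iff_not, not_lt]
          have : row.getD j 0 < x := srt_getD_lt hsrt hj hi
          rw [← List.getD_eq_getElem row 0 (by omega)]
          exact this.le
      have h6 : (row.set i y).set i x = row := by
        rw [List.set_set, hxdef, set_getD_self]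
      have h7 : (row.set i y)[i]? = some y := by
        rw [List.getElem?_set, if_pos rfl, if_pos (by simpa using hi)]
      unfold insertInRow
      rw [hfind]
      show ((row.set i y).set i x, (row.set i y)[i]?) = (row, some y)
      rw [h6, h7]
    refine ⟨⟨set_ne_nil hne i y, srt_set hsrt hi (fun j hj => hlowf j (by omega)) hhighf,
        hcolOK, IH1⟩, ?_, ?_, ?_, ?_, ?_⟩
    · rw [List.flatten_cons, List.flatten_cons]
      have p2 : (row ++ rs.flatten).Perm (row ++ (y :: rs'.flatten)) := IHperm.append_left _
      have p3 : (row ++ (y :: rs'.flatten)).Perm (y :: (row ++ rs'.flatten)) := List.perm_middle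
      have p4 : (y :: row).Perm (row.set i y ++ [x]) := (perm_set hi y).symm
      have p5 : (y :: (row ++ rs'.flatten)).Perm ((row.set i y ++ [x]) ++ rs'.flatten) := by
        have := p4.append_right rs'.flatten
        simpa using this
      have p6 : ((row.set i y ++ [x]) ++ rs'.flatten).Perm (x :: (row.set i y ++ rs'.flatten)) := by
        rw [List.append_assoc, List.singleton_append]
        exact List.perm_middle
      exact ((p2.trans p3).trans p5).trans p6
    · simp only [rowInsertT, hinseq]
      rw [IHins]
    · simp only [bumpRow, hinseq]
      rw [IHbump]
    · intro i'
      cases i' with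
      | zero => simp [List.length_set]
      | succ n =>
        simp only [List.getD_cons_succ]
        rw [IHlen n]
        split_ifs <;> omega
    · have hrlt : r < rs.length := by
        apply getD_ne_nil
        intro h
        rw [h] at hr
        simp at hr
      simp only [List.length_cons, List.getD_cons_succ, IHlistlen]
      split_ifs <;> omega


def addBox (Q : List (List ℕ)) (r c : ℕ) : List (List ℕ) :=
  if r < Q.length then Q.set r (Q.getD r [] ++ [c]) else Q ++ [[c]]

def delQ (Q : List (List ℕ)) (r : ℕ) : List (List ℕ) :=
  if (Q.getD r []).length ≤ 1 then Q.eraseIdx r else Q.set r (Q.getD r []).dropLast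

/- generic getD helpers -/
lemma getD_set_ne' {α : Type} (L : List α) (d : α) (i j : ℕ) (x : α) (h : i ≠ j) :
    (L.set i x).getD j d = L.getD j d := by
  rw [List.getD_eq_getElem?_getD, List.getD_eq_getElem?_getD, List.getElem?_set, if_neg h]

lemma getD_set_self' {α : Type} {L : List α} {i : ℕ} (h : i < L.length) (x d : α) :
    (L.set i x).getD i d = x := by
  rw [List.getD_eq_getElem?_getD, List.getElem?_set, if_pos rfl, if_pos h]
  rfl

lemma getD_concat_self' {α : Type} (l : List α) (x d : α) : (l ++ [x]).getD l.length d = x := by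
  rw [List.getD_eq_getElem?_getD, List.getElem?_concat_length]
  rfl

lemma set_getD_self' {α : Type} (L : List α) (i : ℕ) (d : α) : L.set i (L.getD i d) = L := by
  apply List.ext_getElem?
  intro n
  rw [List.getElem?_set]
  by_cases h : i = n
  · subst h
    by_cases h2 : i < L.length
    · simp [h2, List.getD_eq_getElem L d h2, List.getElem?_eq_getElem h2]
    · simp [h2, List.getElem?_eq_none (show L.length ≤ i by omega)]
  · simp [h]

lemma getD_out {α : Type} (L : List α) (d : α) {j : ℕ} (h : L.length ≤ j) : L.getD j d = d := by
  rw [List.getD_eq_getElem?_getD, List.getElem?_eq_none h]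
  rfl

lemma mem_flatten_of_getD {L : List (List ℕ)} {i : ℕ} {z : ℕ} (h : z ∈ L.getD i []) :
    z ∈ L.flatten := by
  have hi : i < L.length := by
    by_contra hc
    rw [getD_out L [] (by omega)] at h
    simp at h
  rw [List.getD_eq_getElem L [] hi] at h
  exact List.mem_flatten.2 ⟨L[i], List.getElem_mem hi, h⟩

lemma tab_getD_ne : ∀ {Q : List (List ℕ)}, Tab Q → ∀ {i : ℕ}, i < Q.length → Q.getD i [] ≠ []
  | [], _, i, hi => by simp at hi
  | q :: qs, hQ, 0, hi => by simpa using hQ.1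
  | q :: qs, hQ, (i+1), hi => by
    rw [List.getD_cons_succ]
    exact tab_getD_ne hQ.2.2.2 (by simpa using hi)

lemma tab_col : ∀ {T : List (List ℕ)}, Tab T → ∀ i j, j < (T.getD (i+1) []).length →
    (T.getD i []).getD j 0 < (T.getD (i+1) []).getD j 0
  | [], _, i, j, hj => by simp at hj
  | row :: rs, hT, 0, j, hj => by
    simp only [List.getD_cons_succ, List.getD_cons_zero] at *
    exact hT.2.2.1.2 j hj
  | row :: rs, hT, (i+1), j, hj => by
    simp only [List.getD_cons_succ] at *
    exact tab_col hT.2.2.2 i j hj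

lemma tab_len_le : ∀ {T : List (List ℕ)}, Tab T → ∀ i,
    (T.getD (i+1) []).length ≤ (T.getD i []).length
  | [], _, i => by simp
  | row :: rs, hT, 0 => by
    simp only [List.getD_cons_succ, List.getD_cons_zero]
    exact hT.2.2.1.1
  | row :: rs, hT, (i+1) => by
    simp only [List.getD_cons_succ]
    exact tab_len_le hT.2.2.2 i

lemma newBoxRow_eq_bumpRow (T : List (List ℕ)) (x : ℕ) (hT : Tab T)
    (hnd : T.flatten.Nodup) (hx : x ∉ T.flatten) : newBoxRow T x = bumpRow T x := by
  obtain ⟨_, _, hlen, hlistlen, hble⟩ := ins_spec T x hT hnd hx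
  have hblt : bumpRow T x < (rowInsertT T x).length := by
    rw [hlistlen]
    split_ifs <;> omega
  unfold newBoxRow
  rw [List.findIdx_eq (by simpa using hblt)]
  constructor
  · rw [List.getElem_range]
    simp only [decide_eq_true_eq]
    rw [hlen (bumpRow T x), if_pos rfl]
    omega
  · intro j hj
    rw [List.getElem_range]
    simp only [decide_eq_false_iff_not, not_lt]
    rw [hlen j, if_neg (by omega)]
    omega

lemma addBox_cons_succ (q : List ℕ) (qs : List (List ℕ)) (r c : ℕ) :
    addBox (q :: qs) (r+1) c = q :: addBox qs r c := by
  unfold addBox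
  by_cases h : r < qs.length
  · rw [if_pos (by simpa using Nat.succ_lt_succ h), if_pos h, List.set_cons_succ,
      List.getD_cons_succ]
  · rw [if_neg (by simp only [List.length_cons]; omega), if_neg h]
    rfl

lemma addBox_getD_self {Q : List (List ℕ)} {b : ℕ} (h : b ≤ Q.length) (c : ℕ) :
    (addBox Q b c).getD b [] = Q.getD b [] ++ [c] := by
  unfold addBox
  rcases h.lt_or_eq with h' | h'
  · rw [if_pos h', getD_set_self' h' _ _]
  · rw [if_neg (by omega), h', getD_concat_self', getD_out Q [] (by omega)]
    rfl

lemma addBox_getD_ne (Q : List (List ℕ)) {b : ℕ} (c : ℕ) (hb : b ≤ Q.length) {j : ℕ}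
    (h : j ≠ b) : (addBox Q b c).getD j [] = Q.getD j [] := by
  unfold addBox
  by_cases h' : b < Q.length
  · rw [if_pos h', getD_set_ne' _ _ _ _ _ (Ne.symm h)]
  · rw [if_neg h']
    have hbe : b = Q.length := by omega
    rcases Nat.lt_or_ge j Q.length with h2 | h2
    · exact List.getD_append _ _ _ _ h2
    · rw [getD_out Q [] h2, getD_out _ [] (by simp only [List.length_append, List.length_singleton]; omega)]

lemma addBox_length (Q : List (List ℕ)) (b c : ℕ) (h : b ≤ Q.length) :
    (addBox Q b c).length = Q.length + (if b = Q.length then 1 else 0) := by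
  unfold addBox
  rcases h.lt_or_eq with h' | h'
  · rw [if_pos h', List.length_set, if_neg (by omega)]
    rfl
  · rw [if_neg (by omega), if_pos h']
    simp

lemma qadd : ∀ (Q : List (List ℕ)) (r c : ℕ), Tab Q →
    (∀ a ∈ Q.flatten, a < c) → r ≤ Q.length →
    (∀ r', r = r' + 1 → (Q.getD r []).length < (Q.getD r' []).length) →
    Tab (addBox Q r c) ∧
    (addBox Q r c).flatten.Perm (c :: Q.flatten)
  | [], r, c, _, _, hr, _ => by
    have : r = 0 := by simpa using hr
    subst this
    refine ⟨⟨by simp, by simp [Srt, List.Chain'], ⟨by simp, by simp⟩, trivial⟩, ?_⟩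
    simp [addBox]
  | q :: qs, 0, c, hQ, hflt, hr, hcorner => by
    obtain ⟨hne, hsrt, hcol, htab⟩ := hQ
    have hq : addBox (q :: qs) 0 c = (q ++ [c]) :: qs := by
      unfold addBox
      rw [if_pos (by simp), List.set_cons_zero, List.getD_cons_zero]
    rw [hq]
    have hqlt : ∀ z ∈ q, z < c := fun z hz => hflt z (by simp [List.flatten_cons, hz])
    refine ⟨⟨by simp, srt_concat hsrt hqlt,
      ⟨hcol.1.trans (by simp), fun j hj => by
        rw [List.getD_append _ _ _ _ (hj.trans_le hcol.1)]; exact hcol.2 j hj⟩, htab⟩, ?_⟩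
    rw [List.flatten_cons, List.flatten_cons, ← List.cons_append]
    exact (List.perm_append_singleton c q).append_right qs.flatten
  | q :: qs, (r+1), c, hQ, hflt, hr, hcorner => by
    obtain ⟨hne, hsrt, hcol, htab⟩ := hQ
    rw [addBox_cons_succ]
    have hr' : r ≤ qs.length := by simpa using hr
    have hcorner' : ∀ r', r = r' + 1 → (qs.getD r []).length < (qs.getD r' []).length := by
      intro r' he
      have := hcorner (r'+1) (by omega)
      simpa using this
    have hflt' : ∀ a ∈ qs.flatten, a < c := fun a ha => hflt a (by simp [List.flatten_cons, ha])
    obtain ⟨IH1, IH2⟩ := qadd qs r c htab hflt' hr' hcorner'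
    have hcolOK : colOK q ((addBox qs r c).getD 0 []) := by
      cases r with
      | zero =>
        have hhead : (addBox qs 0 c).getD 0 [] = qs.getD 0 [] ++ [c] :=
          addBox_getD_self (by simp) c
        rw [hhead]
        have hlt : (qs.getD 0 []).length < q.length := by
          have := hcorner 0 rfl
          simpa using this
        refine ⟨by simp only [List.length_append, List.length_singleton]; omega, ?_⟩
        intro j hj
        simp only [List.length_append, List.length_singleton] at hj
        rcases Nat.lt_or_ge j (qs.getD 0 []).length with h2 | h2
        · rw [List.getD_append _ _ _ _ h2]
          exact hcol.2 j h2
        · have hje : j = (qs.getD 0 []).length := by omega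
          have hqlt : ∀ z ∈ q, z < c := fun z hz => hflt z (by simp [List.flatten_cons, hz])
          rw [hje, getD_concat_self']
          exact hqlt _ (getD_mem (by omega))
      | succ n =>
        rw [addBox_getD_ne qs c (by omega) (by omega)]
        exact hcol
    refine ⟨⟨hne, hsrt, hcolOK, IH1⟩, ?_⟩
    rw [List.flatten_cons, List.flatten_cons]
    have p1 : (q ++ (addBox qs (r) c).flatten).Perm (q ++ (c :: qs.flatten)) := IH2.append_left q
    exact p1.trans List.perm_middle


lemma findIdx_addBox (Q : List (List ℕ)) {b : ℕ} (c : ℕ) (hb : b ≤ Q.length)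
    (hflt : ∀ a ∈ Q.flatten, a < c) :
    (addBox Q b c).findIdx (fun row => decide (c ∈ row)) = b := by
  have hlen := addBox_length Q b c hb
  have hblt : b < (addBox Q b c).length := by rw [hlen]; split_ifs <;> omega
  rw [List.findIdx_eq hblt]
  constructor
  · rw [← List.getD_eq_getElem _ [] hblt, addBox_getD_self hb]
    simp
  · intro j hj
    rw [← List.getD_eq_getElem _ [] (by omega), addBox_getD_ne Q c hb (by omega)]
    simp only [decide_eq_false_iff_not]
    intro hmem
    exact lt_irrefl c (hflt c (mem_flatten_of_getD hmem))

lemma delQ_addBox (Q : List (List ℕ)) (b c : ℕ) (hQ : Tab Q) (hb : b ≤ Q.length) :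
    delQ (addBox Q b c) b = Q := by
  unfold delQ
  rw [addBox_getD_self hb]
  rcases hb.lt_or_eq with h' | h'
  · have hne := tab_getD_ne hQ h'
    have h2 : ¬ ((Q.getD b [] ++ [c]).length ≤ 1) := by
      simp only [List.length_append, List.length_singleton]
      have := List.length_pos_iff.2 hne
      omega
    rw [if_neg h2, List.dropLast_concat]
    unfold addBox
    rw [if_pos h', List.set_set, set_getD_self']
  · have h2 : (Q.getD b [] ++ [c]).length ≤ 1 := by
      rw [getD_out Q [] (by omega)]
      simp
    rw [if_pos h2]
    unfold addBox
    rw [if_neg (by omega), List.eraseIdx_append_of_length_le (by omega)]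
    have : b - Q.length = 0 := by omega
    rw [this]
    simp [List.eraseIdx]

lemma mem_last_of_max {row : List ℕ} (hsrt : Srt row) {c : ℕ} (hc : c ∈ row)
    (hmax : ∀ a ∈ row, a ≤ c) : row.getD (row.length - 1) 0 = c := by
  obtain ⟨j, hj, hje⟩ := List.mem_iff_getElem.1 hc
  rcases eq_or_ne j (row.length - 1) with rfl | hne
  · rw [List.getD_eq_getElem _ 0 hj, hje]
  · exfalso
    have hjl : j < row.length - 1 := by omega
    have h1 := srt_getD_lt hsrt hjl (by omega : row.length - 1 < row.length)
    rw [List.getD_eq_getElem _ 0 hj, hje] at h1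
    exact absurd (hmax _ (getD_mem (by omega : row.length - 1 < row.length))) (not_le.2 h1)

lemma delQ_cons_succ (q : List ℕ) (qs : List (List ℕ)) (r : ℕ) :
    delQ (q :: qs) (r+1) = q :: delQ qs r := by
  unfold delQ
  rw [List.getD_cons_succ]
  by_cases h : (qs.getD r []).length ≤ 1
  · rw [if_pos h, if_pos h]
    rfl
  · rw [if_neg h, if_neg h, List.set_cons_succ]

lemma qdel_main : ∀ (Q : List (List ℕ)) (r c : ℕ), Tab Q → Q.flatten.Nodup →
    (∀ a ∈ Q.flatten, a ≤ c) → r < Q.length → c ∈ Q.getD r [] →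
    (Q.getD (r+1) []).length < (Q.getD r []).length →
    Tab (delQ Q r) ∧ (delQ Q r).flatten.Perm (Q.flatten.erase c) ∧
    (∀ i, ((delQ Q r).getD i []).length = (Q.getD i []).length - (if i = r then 1 else 0)) ∧
    (delQ Q r).length = Q.length - (if (Q.getD r []).length ≤ 1 then 1 else 0) ∧
    addBox (delQ Q r) r c = Q
  | [], r, c, _, _, _, hr, _, _ => by simp at hr
  | q :: qs, 0, c, hQ, hnd, hmax, hr, hc, hcorner => by
    obtain ⟨hne, hsrt, hcol, htab⟩ := hQ
    rw [List.flatten_cons, List.nodup_append] at hnd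
    obtain ⟨hndq, hndqs, hdisj⟩ := hnd
    simp only [List.getD_cons_zero, List.getD_cons_succ] at hc hcorner ⊢
    have hrowlen : 0 < q.length := List.length_pos_iff.2 hne
    by_cases h1 : q.length ≤ 1
    · have hq1 : q.length = 1 := by omega
      obtain ⟨a, ha⟩ := List.length_eq_one_iff.1 hq1
      subst ha
      have hac : a = c := by have := hc; simp at this; omega
      subst hac
      have hqs : qs = [] := by
        cases qs with
        | nil => rfl
        | cons q1 qs' =>
          exfalso
          have : q1.length = 0 := by
            simp only [List.getD_cons_zero] at hcorner; omega
          exact htab.1 (List.length_eq_zero_iff.1 this)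
      subst hqs
      have hdel : delQ [[a]] 0 = [] := by
        unfold delQ
        rw [if_pos (by simp)]
        rfl
      rw [hdel]
      refine ⟨trivial, by simp, ?_, by simp, ?_⟩
      · intro i
        cases i <;> simp
      · unfold addBox
        rw [if_neg (by simp)]
        rfl
    · have hdel : delQ (q :: qs) 0 = q.dropLast :: qs := by
        unfold delQ
        rw [List.getD_cons_zero, if_neg h1, List.set_cons_zero]
      rw [hdel]
      have hlast : q.getLast hne = c := by
        rw [List.getLast_eq_getElem, ← List.getD_eq_getElem _ 0 (by omega)]
        exact mem_last_of_max hsrt hc (fun a ha => hmax a (by simp [List.flatten_cons, ha]))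
      have hqsplit : q.dropLast ++ [c] = q := by
        rw [← hlast]; exact List.dropLast_append_getLast hne
      have hcnotdl : c ∉ q.dropLast := by
        intro hmem
        have := hndq
        rw [← hqsplit, List.nodup_append] at this
        exact this.2.2 _ hmem _ (by simp) rfl
      have herase : q.erase c = q.dropLast := by
        conv_lhs => rw [← hqsplit]
        rw [List.erase_append_right _ hcnotdl]
        simp
      refine ⟨?_, ?_, ?_, ?_, ?_⟩
      · refine ⟨?_, hsrt.sublist (List.dropLast_sublist q), ⟨?_, ?_⟩, htab⟩
        · intro h
          rw [← List.length_eq_zero_iff, List.length_dropLast] at h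
          omega
        · rw [List.length_dropLast]
          omega
        · intro j hj
          have hj2 : j < q.dropLast.length := by
            rw [List.length_dropLast]; omega
          rw [List.getD_eq_getElem _ 0 hj2, List.getElem_dropLast,
            ← List.getD_eq_getElem _ 0 (by omega : j < q.length)]
          exact hcol.2 j hj
      · rw [List.flatten_cons, List.flatten_cons, List.erase_append_left _ hc, herase]
      · intro i
        cases i with
        | zero => simp [List.length_dropLast]
        | succ n => simp
      · simp only [List.length_cons, List.getD_cons_zero, if_neg h1]
        omega
      · unfold addBox
        rw [if_pos (by simp), List.set_cons_zero, List.getD_cons_zero, hqsplit]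
  | q :: qs, (r+1), c, hQ, hnd, hmax, hr, hc, hcorner => by
    obtain ⟨hne, hsrt, hcol, htab⟩ := hQ
    rw [List.flatten_cons, List.nodup_append] at hnd
    obtain ⟨hndq, hndqs, hdisj⟩ := hnd
    simp only [List.getD_cons_succ] at hc hcorner
    have hr' : r < qs.length := getD_ne_nil (fun h => by rw [h] at hc; simp at hc)
    have hmax' : ∀ a ∈ qs.flatten, a ≤ c := fun a ha => hmax a (by simp [List.flatten_cons, ha])
    obtain ⟨IH1, IH2, IH3, IH4, IH5⟩ := qdel_main qs r c htab hndqs hmax' hr' hc hcorner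
    rw [delQ_cons_succ]
    have hcfqs : c ∈ qs.flatten := mem_flatten_of_getD hc
    have hcq : c ∉ q := fun h => hdisj _ h _ hcfqs rfl
    have hcolOK : colOK q ((delQ qs r).getD 0 []) := by
      cases r with
      | zero =>
        by_cases h2 : (qs.getD 0 []).length ≤ 1
        · have hl0 : ((delQ qs 0).getD 0 []).length = 0 := by
            rw [IH3 0, if_pos rfl]
            omega
          exact ⟨by omega, fun j hj => absurd hj (by omega)⟩
        · have h0qs : 0 < qs.length := by omega
          have hdel0 : delQ qs 0 = qs.set 0 (qs.getD 0 []).dropLast := by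
            unfold delQ
            rw [if_neg h2]
          rw [hdel0, getD_set_self' h0qs _ _]
          refine ⟨?_, ?_⟩
          · rw [List.length_dropLast]
            have := hcol.1
            omega
          · intro j hj
            rw [List.length_dropLast] at hj
            have hj2 : j < (qs.getD 0 []).dropLast.length := by
              rw [List.length_dropLast]; omega
            rw [List.getD_eq_getElem _ 0 hj2, List.getElem_dropLast,
              ← List.getD_eq_getElem _ 0 (by omega : j < (qs.getD 0 []).length)]
            exact hcol.2 j (by omega)
      | succ n =>
        cases qs with
        | nil => simp at hr'
        | cons q1 qs' =>
          rw [delQ_cons_succ]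
          exact hcol
    refine ⟨⟨hne, hsrt, hcolOK, IH1⟩, ?_, ?_, ?_, ?_⟩
    · rw [List.flatten_cons, List.flatten_cons, List.erase_append_right _ hcq]
      exact IH2.append_left q
    · intro i
      cases i with
      | zero => simp
      | succ n =>
        simp only [List.getD_cons_succ, List.length_cons]
        rw [IH3 n]
        split_ifs <;> omega
    · simp only [List.length_cons, List.getD_cons_succ, IH4]
      split_ifs <;> omega
    · rw [addBox_cons_succ, IH5]


lemma rskStep_def (PQ : List (List ℕ) × List (List ℕ)) (xi : ℕ × ℕ) :
    rskStep PQ xi = (rowInsertT PQ.1 xi.1, addBox PQ.2 (newBoxRow PQ.1 xi.1) xi.2) := rfl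

def unstep (k : ℕ) (PQ : List (List ℕ) × List (List ℕ)) :
    (List (List ℕ) × List (List ℕ)) × ℕ :=
  (((delT (PQ.2.findIdx (fun row => decide (k ∈ row))) PQ.1).1,
     delQ PQ.2 (PQ.2.findIdx (fun row => decide (k ∈ row)))),
   (delT (PQ.2.findIdx (fun row => decide (k ∈ row))) PQ.1).2)

structure Good (k : ℕ) (S : List ℕ) (PQ : List (List ℕ) × List (List ℕ)) : Prop where
  tabP : Tab PQ.1
  tabQ : Tab PQ.2
  permP : PQ.1.flatten.Perm S
  permQ : PQ.2.flatten.Perm (List.range' 1 k)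
  shape : shapeT PQ.1 = shapeT PQ.2

lemma shapeT_eq_of (A B : List (List ℕ)) (hlen : A.length = B.length)
    (h : ∀ i, (A.getD i []).length = (B.getD i []).length) : shapeT A = shapeT B := by
  apply List.ext_getElem (by simpa [shapeT] using hlen)
  intro i h1 h2
  simp only [shapeT, List.getElem_map]
  rw [← List.getD_eq_getElem A [] (by simpa [shapeT] using h1),
    ← List.getD_eq_getElem B [] (by simpa [shapeT] using h2)]
  exact h i

lemma shapeT_len {A B : List (List ℕ)} (h : shapeT A = shapeT B) : A.length = B.length := by
  have := congrArg List.length h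
  simpa [shapeT] using this

lemma shapeT_getD_len {A B : List (List ℕ)} (h : shapeT A = shapeT B) (i : ℕ) :
    (A.getD i []).length = (B.getD i []).length := by
  rcases Nat.lt_or_ge i A.length with h1 | h1
  · have h2 : i < B.length := by rw [← shapeT_len h]; exact h1
    have hA : (A.getD i []).length = (shapeT A).getD i 0 := by
      rw [List.getD_eq_getElem A [] h1, List.getD_eq_getElem _ 0 (by simpa [shapeT] using h1)]
      simp [shapeT]
    have hB : (B.getD i []).length = (shapeT B).getD i 0 := by
      rw [List.getD_eq_getElem B [] h2, List.getD_eq_getElem _ 0 (by simpa [shapeT] using h2)]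
      simp [shapeT]
    rw [hA, hB, h]
  · have h2 : B.length ≤ i := by rw [← shapeT_len h]; exact h1
    rw [getD_out A [] h1, getD_out B [] h2]

lemma range'_lt {k a : ℕ} (h : a ∈ List.range' 1 k) : a < k + 1 := by
  rw [List.mem_range'] at h
  obtain ⟨i, hi, rfl⟩ := h
  omega

lemma range'_pos {k a : ℕ} (h : a ∈ List.range' 1 k) : 1 ≤ a := by
  rw [List.mem_range'] at h
  obtain ⟨i, hi, rfl⟩ := h
  omega

lemma range'_succ_perm (k : ℕ) : (List.range' 1 (k+1)).Perm ((k+1) :: List.range' 1 k) := by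
  rw [List.range'_1_concat, Nat.add_comm 1 k]
  exact List.perm_append_singleton _ _

lemma find_max_row (Q : List (List ℕ)) (k : ℕ) (hQ : Tab Q)
    (hperm : Q.flatten.Perm (List.range' 1 (k+1))) :
    Q.findIdx (fun row => decide ((k+1) ∈ row)) < Q.length ∧
    (k+1) ∈ Q.getD (Q.findIdx (fun row => decide ((k+1) ∈ row))) [] ∧
    (Q.getD (Q.findIdx (fun row => decide ((k+1) ∈ row)) + 1) []).length <
      (Q.getD (Q.findIdx (fun row => decide ((k+1) ∈ row))) []).length := by
  have hmem : (k+1) ∈ Q.flatten := by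
    apply hperm.mem_iff.2
    rw [List.mem_range']
    exact ⟨k, by omega, by omega⟩
  obtain ⟨row, hrowQ, hrowmem⟩ := List.mem_flatten.1 hmem
  have hrlt : Q.findIdx (fun row => decide ((k+1) ∈ row)) < Q.length :=
    List.findIdx_lt_length_of_exists ⟨row, hrowQ, by simpa using hrowmem⟩
  set r := Q.findIdx (fun row => decide ((k+1) ∈ row)) with hrdef
  have hmem2 : (k+1) ∈ Q.getD r [] := by
    rw [List.getD_eq_getElem _ [] hrlt]
    exact of_decide_eq_true (List.findIdx_getElem (w := hrlt))
  refine ⟨hrlt, hmem2, ?_⟩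
  have hmax : ∀ a ∈ Q.flatten, a ≤ k + 1 := by
    intro a ha
    have := range'_lt (hperm.mem_iff.1 ha)
    omega
  obtain ⟨j, hj, hje⟩ := List.mem_iff_getElem.1 hmem2
  by_contra hcon
  push_neg at hcon
  have hjlt : j < (Q.getD (r+1) []).length := by omega
  have h1 := tab_col hQ r j hjlt
  rw [List.getD_eq_getElem _ 0 hj, hje] at h1
  have h2 : (Q.getD (r+1) []).getD j 0 ≤ k + 1 :=
    hmax _ (mem_flatten_of_getD (getD_mem hjlt))
  omega

lemma step_good {k : ℕ} {S : List ℕ} {PQ : List (List ℕ) × List (List ℕ)} {x : ℕ}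
    (h : Good k S PQ) (hS : S.Nodup) (hx : x ∉ S) :
    Good (k+1) (x :: S) (rskStep PQ (x, k+1)) ∧
    unstep (k+1) (rskStep PQ (x, k+1)) = (PQ, x) := by
  obtain ⟨tabP, tabQ, permP, permQ, shape⟩ := h
  have hndP : PQ.1.flatten.Nodup := permP.nodup_iff.2 hS
  have hxP : x ∉ PQ.1.flatten := fun hh => hx (permP.mem_iff.1 hh)
  obtain ⟨insTab, insPerm, insLen, insListLen, insBle⟩ := ins_spec PQ.1 x tabP hndP hxP
  have hnb : newBoxRow PQ.1 x = bumpRow PQ.1 x := newBoxRow_eq_bumpRow PQ.1 x tabP hndP hxP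
  set b := bumpRow PQ.1 x with hbdef
  have hQlenP : PQ.1.length = PQ.2.length := shapeT_len shape
  have hble : b ≤ PQ.2.length := by omega
  have hQflt : ∀ a ∈ PQ.2.flatten, a < k + 1 :=
    fun a ha => range'_lt (permQ.mem_iff.1 ha)
  have hcornerQ : ∀ r', b = r' + 1 →
      (PQ.2.getD b []).length < (PQ.2.getD r' []).length := by
    intro r' he
    have h1 := tab_len_le insTab r'
    rw [← he] at h1
    rw [insLen b, if_pos rfl, insLen r', if_neg (by omega)] at h1
    rw [← shapeT_getD_len shape, ← shapeT_getD_len shape]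
    omega
  obtain ⟨qaTab, qaPerm⟩ := qadd PQ.2 b (k+1) tabQ hQflt hble hcornerQ
  have hstep : rskStep PQ (x, k+1) = (rowInsertT PQ.1 x, addBox PQ.2 b (k+1)) := by
    rw [rskStep_def, hnb]
  have hshape' : shapeT (rowInsertT PQ.1 x) = shapeT (addBox PQ.2 b (k+1)) := by
    apply shapeT_eq_of
    · rw [insListLen, addBox_length PQ.2 b (k+1) hble, hQlenP]
    · intro i
      rcases eq_or_ne i b with heq | hne
      · rw [heq, insLen b, if_pos rfl, addBox_getD_self hble]
        rw [List.length_append, List.length_singleton, shapeT_getD_len shape]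
      · rw [insLen i, if_neg hne, addBox_getD_ne PQ.2 (k+1) hble hne,
          shapeT_getD_len shape]
        omega
  constructor
  · rw [hstep]
    refine ⟨insTab, qaTab, ?_, ?_, hshape'⟩
    · exact insPerm.trans (permP.cons x)
    · exact (qaPerm.trans (permQ.cons (k+1))).trans (range'_succ_perm k).symm
  · rw [hstep]
    unfold unstep
    simp only
    rw [findIdx_addBox PQ.2 (k+1) hble hQflt]
    have hrt1 := rt1 PQ.1 x tabP hndP hxP
    rw [← hbdef] at hrt1
    rw [hrt1, delQ_addBox PQ.2 b (k+1) tabQ hble]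

lemma unstep_good {k : ℕ} {S : List ℕ} {PQ : List (List ℕ) × List (List ℕ)}
    (h : Good (k+1) S PQ) (hS : S.Nodup) :
    (unstep (k+1) PQ).2 ∈ S ∧
    Good k (S.erase (unstep (k+1) PQ).2) (unstep (k+1) PQ).1 ∧
    rskStep (unstep (k+1) PQ).1 ((unstep (k+1) PQ).2, k+1) = PQ := by
  obtain ⟨tabP, tabQ, permP, permQ, shape⟩ := h
  have hndP : PQ.1.flatten.Nodup := permP.nodup_iff.2 hS
  have hndQ : PQ.2.flatten.Nodup := permQ.nodup_iff.2 (List.nodup_range' (s := 1) (n := k+1))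
  obtain ⟨hrlt, hrmem, hrcorner⟩ := find_max_row PQ.2 k tabQ permQ
  set r := PQ.2.findIdx (fun row => decide ((k+1) ∈ row)) with hrdef
  have hPcorner : (PQ.1.getD (r+1) []).length < (PQ.1.getD r []).length := by
    rw [shapeT_getD_len shape, shapeT_getD_len shape]
    exact hrcorner
  obtain ⟨rtTab, rtPerm, rtIns, rtBump, rtLen, rtListLen⟩ := rt2 r PQ.1 tabP hndP hPcorner
  have hmax : ∀ a ∈ PQ.2.flatten, a ≤ k + 1 := by
    intro a ha
    have := range'_lt (permQ.mem_iff.1 ha)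
    omega
  obtain ⟨qdTab, qdPerm, qdLen, qdListLen, qdAdd⟩ :=
    qdel_main PQ.2 r (k+1) tabQ hndQ hmax hrlt hrmem hrcorner
  set x := (delT r PQ.1).2 with hxdef
  set P' := (delT r PQ.1).1 with hPdef
  have hxmem : x ∈ PQ.1.flatten := rtPerm.mem_iff.2 List.mem_cons_self
  have hxS : x ∈ S := permP.mem_iff.1 hxmem
  have hcons : (x :: P'.flatten).Nodup := rtPerm.nodup_iff.1 hndP
  have hxP' : x ∉ P'.flatten := (List.nodup_cons.1 hcons).1
  have hndP' : P'.flatten.Nodup := (List.nodup_cons.1 hcons).2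
  have hunstep : unstep (k+1) PQ = ((P', delQ PQ.2 r), x) := rfl
  rw [hunstep]
  refine ⟨hxS, ⟨rtTab, qdTab, ?_, ?_, ?_⟩, ?_⟩
  · have h1 : S.Perm (x :: P'.flatten) := permP.symm.trans rtPerm
    have h2 := h1.erase x
    rw [List.erase_cons_head] at h2
    exact h2.symm
  · refine qdPerm.trans ?_
    have h1 := permQ.erase (k+1)
    refine h1.trans ?_
    rw [List.range'_1_concat, Nat.add_comm 1 k,
      List.erase_append_right _ (fun hh => by have := range'_lt hh; omega),
      List.erase_cons_head, List.append_nil]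
  · apply shapeT_eq_of
    · rw [rtListLen, qdListLen, shapeT_len shape, shapeT_getD_len shape]
    · intro i
      rw [rtLen i, qdLen i, shapeT_getD_len shape]
  · rw [rskStep_def]
    simp only
    have hnb : newBoxRow P' x = bumpRow P' x := newBoxRow_eq_bumpRow P' x rtTab hndP' hxP'
    rw [hnb, rtBump, rtIns, qdAdd]


/-! ### fold lemmas -/

lemma fold_concat (l : List ℕ) (x : ℕ) :
    ((l ++ [x]).zip (List.range' 1 (l ++ [x]).length)).foldl rskStep ([], []) =
    rskStep ((l.zip (List.range' 1 l.length)).foldl rskStep ([], [])) (x, l.length + 1) := by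
  rw [List.length_append, List.length_singleton, List.range'_1_concat,
    List.zip_append (by rw [List.length_range']), List.foldl_append]
  simp [Nat.add_comm 1 l.length]

lemma good_fold (l : List ℕ) (hnd : l.Nodup) :
    Good l.length l.reverse ((l.zip (List.range' 1 l.length)).foldl rskStep ([], [])) := by
  induction l using List.reverseRecOn with
  | nil => exact ⟨trivial, trivial, by simp, by simp, rfl⟩
  | append_singleton l x ih =>
    rw [List.nodup_append] at hnd
    obtain ⟨hnd1, -, hdisj⟩ := hnd
    have hxnotl : x ∉ l.reverse := by
      rw [List.mem_reverse]
      exact fun hh => hdisj _ hh _ (by simp) rfl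
    have h1 := ih hnd1
    have h2 := (step_good h1 (by simpa using hnd1) hxnotl).1
    rw [fold_concat]
    simpa using h2

lemma inj_core : ∀ (n : ℕ) (l1 l2 : List ℕ), l1.Nodup → l2.Nodup →
    l1.length = n → l2.length = n →
    (l1.zip (List.range' 1 l1.length)).foldl rskStep ([], []) =
      (l2.zip (List.range' 1 l2.length)).foldl rskStep ([], []) →
    l1 = l2 := by
  intro n
  induction n with
  | zero =>
    intro l1 l2 _ _ h1 h2 _
    rw [List.length_eq_zero_iff] at h1 h2
    rw [h1, h2]
  | succ k ih =>
    intro l1 l2 hnd1 hnd2 hl1 hl2 heq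
    rcases List.eq_nil_or_concat l1 with rfl | ⟨L1, a, rfl⟩
    · simp at hl1
    rcases List.eq_nil_or_concat l2 with rfl | ⟨L2, b, rfl⟩
    · simp at hl2
    simp only [List.concat_eq_append] at *
    have hL1 : L1.length = k := by
      rw [List.length_append, List.length_singleton] at hl1; omega
    have hL2 : L2.length = k := by
      rw [List.length_append, List.length_singleton] at hl2; omega
    rw [fold_concat, fold_concat, hL1, hL2] at heq
    rw [List.nodup_append] at hnd1 hnd2
    obtain ⟨hnd1', -, hdisj1⟩ := hnd1
    obtain ⟨hnd2', -, hdisj2⟩ := hnd2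
    have ha : a ∉ L1.reverse := by
      rw [List.mem_reverse]; exact fun hh => hdisj1 _ hh _ (by simp) rfl
    have hb : b ∉ L2.reverse := by
      rw [List.mem_reverse]; exact fun hh => hdisj2 _ hh _ (by simp) rfl
    have g1 := good_fold L1 hnd1'
    have g2 := good_fold L2 hnd2'
    rw [hL1] at g1
    rw [hL2] at g2
    have u1 := (step_good g1 (by simpa using hnd1') ha).2
    have u2 := (step_good g2 (by simpa using hnd2') hb).2
    rw [heq, u2] at u1
    have hfoldeq : (L1.zip (List.range' 1 L1.length)).foldl rskStep ([], []) =
        (L2.zip (List.range' 1 L2.length)).foldl rskStep ([], []) := by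
      rw [hL1, hL2]
      have := congrArg Prod.fst u1
      simpa using this.symm
    have hab : b = a := by
      have := congrArg Prod.snd u1
      simpa using this
    rw [ih L1 L2 hnd1' hnd2' hL1 hL2 hfoldeq, hab]

lemma sur_core : ∀ (k : ℕ) (P Q : List (List ℕ)), Tab P → P.flatten.Nodup → Tab Q →
    Q.flatten.Perm (List.range' 1 k) → shapeT P = shapeT Q →
    ∃ l : List ℕ, l.Nodup ∧ l.length = k ∧ l.Perm P.flatten ∧
      (l.zip (List.range' 1 l.length)).foldl rskStep ([], []) = (P, Q) := by
  intro k
  induction k with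
  | zero =>
    intro P Q _ _ hQtab hQperm hshape
    have hQnil : Q = [] := by
      have h1 : Q.flatten = [] := by
        have := hQperm.length_eq
        simp only [List.length_range'] at this
        exact List.length_eq_zero_iff.1 this
      cases Q with
      | nil => rfl
      | cons q qs =>
        exfalso
        rw [List.flatten_cons, List.append_eq_nil_iff] at h1
        exact hQtab.1 h1.1
    have hPnil : P = [] := by
      have := shapeT_len hshape
      rw [hQnil] at this
      simpa using List.length_eq_zero_iff.1 (by simpa using this)
    subst hQnil hPnil
    exact ⟨[], by simp, rfl, by simp, rfl⟩
  | succ k ih =>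
    intro P Q hPtab hndP hQtab hQperm hshape
    have hGood : Good (k+1) P.flatten (P, Q) := ⟨hPtab, hQtab, List.Perm.refl _, hQperm, hshape⟩
    obtain ⟨hxmem, hGood', hrec⟩ := unstep_good hGood hndP
    set x := (unstep (k+1) (P, Q)).2 with hxdef
    set PQ' := (unstep (k+1) (P, Q)).1 with hPQdef
    have hndE : (P.flatten.erase x).Nodup := hndP.erase x
    have hndP' : PQ'.1.flatten.Nodup := hGood'.permP.nodup_iff.2 hndE
    obtain ⟨l', hnd', hlen', hperm', hfold'⟩ :=
      ih PQ'.1 PQ'.2 hGood'.tabP hndP' hGood'.tabQ hGood'.permQ hGood'.shape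
    have hxl' : x ∉ l' := by
      intro hh
      exact (hndP.not_mem_erase) ((hGood'.permP.mem_iff).1 (hperm'.mem_iff.1 hh))
    refine ⟨l' ++ [x], ?_, ?_, ?_, ?_⟩
    · rw [List.nodup_append]
      exact ⟨hnd', by simp, fun a ha b hb => by simp at hb; subst hb; exact fun h => hxl' (h ▸ ha)⟩
    · rw [List.length_append, List.length_singleton, hlen']
    · have p1 : (l' ++ [x]).Perm (x :: l') := List.perm_append_singleton x l'
      have p2 : (x :: l').Perm (x :: P.flatten.erase x) :=
        (hperm'.trans hGood'.permP).cons x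
      exact (p1.trans p2).trans (List.perm_cons_erase hxmem).symm
    · rw [fold_concat, hfold', hlen']
      exact hrec

/-! ### conversion between Tab and isSYT -/

lemma tab_no_nil : ∀ {T : List (List ℕ)}, Tab T → [] ∉ T
  | [], _ => by simp
  | row :: rs, hT => by
    simp only [List.mem_cons, not_or]
    exact ⟨fun h => hT.1 h.symm, tab_no_nil hT.2.2.2⟩

lemma tab_chain_len : ∀ {T : List (List ℕ)}, Tab T →
    List.Chain' (fun a b => b.length ≤ a.length) T
  | [], _ => List.isChain_nil
  | row :: rs, hT => by
    rw [List.Chain', List.isChain_cons]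
    refine ⟨?_, tab_chain_len hT.2.2.2⟩
    intro b hb
    cases rs with
    | nil => simp at hb
    | cons r1 rs' =>
      simp only [List.head?_cons, Option.mem_some_iff] at hb
      have := hT.2.2.1.1
      rw [List.getD_cons_zero] at this
      exact hb ▸ this

lemma tab_rows_srt : ∀ {T : List (List ℕ)}, Tab T → ∀ r ∈ T, List.Chain' (· < ·) r
  | [], _ => by simp
  | row :: rs, hT => by
    intro r hr
    rcases List.mem_cons.1 hr with rfl | hr'
    · exact hT.2.1
    · exact tab_rows_srt hT.2.2.2 r hr'

lemma tab_of_parts : ∀ (T : List (List ℕ)), [] ∉ T →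
    List.Chain' (fun a b => b.length ≤ a.length) T →
    (∀ r ∈ T, List.Chain' (· < ·) r) →
    (∀ i j : ℕ, j < (T.getD (i + 1) []).length →
      (T.getD i []).getD j 0 < (T.getD (i + 1) []).getD j 0) →
    Tab T
  | [], _, _, _, _ => trivial
  | row :: rs, hnil, hchain, hrows, hcol => by
    rw [List.Chain', List.isChain_cons] at hchain
    refine ⟨?_, hrows row (by simp), ⟨?_, ?_⟩, ?_⟩
    · intro h; exact hnil (by simp [h])
    · cases rs with
      | nil => simp
      | cons r1 rs' =>
        rw [List.getD_cons_zero]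
        exact hchain.1 r1 (by simp)
    · intro j hj
      have := hcol 0 j (by simpa using hj)
      simpa using this
    · apply tab_of_parts rs (fun h => hnil (by simp [h])) hchain.2
        (fun r hr => hrows r (by simp [hr]))
      intro i j hj
      have := hcol (i+1) j (by simpa using hj)
      simpa using this

lemma isSYT_iff (m : ℕ) (T : List (List ℕ)) :
    isSYT m T ↔ Tab T ∧ T.flatten.Perm (List.range' 1 m) := by
  constructor
  · rintro ⟨h1, h2, h3, h4, h5⟩
    exact ⟨tab_of_parts T h1 h2 h3 h4, h5⟩
  · rintro ⟨hT, hperm⟩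
    exact ⟨tab_no_nil hT, tab_chain_len hT, tab_rows_srt hT, fun i j hj => tab_col hT i j hj,
      hperm⟩

/-! ### permutation words -/

lemma permList_nodup {m : ℕ} (π : Equiv.Perm (Fin m)) : (permList π).Nodup := by
  apply (List.nodup_finRange m).map
  intro i j h
  simp only [Nat.add_right_cancel_iff] at h
  exact π.injective (Fin.val_injective h)

lemma permList_length {m : ℕ} (π : Equiv.Perm (Fin m)) : (permList π).length = m := by
  simp [permList]

lemma permList_perm {m : ℕ} (π : Equiv.Perm (Fin m)) :
    (permList π).Perm (List.range' 1 m) := by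
  have h1 : ((List.finRange m).map π).Perm (List.finRange m) := by
    apply List.perm_of_nodup_nodup_toFinset_eq
    · exact (List.nodup_finRange m).map π.injective
    · exact List.nodup_finRange m
    · ext a
      simp only [List.mem_toFinset, List.mem_map]
      constructor
      · intro _; exact List.mem_finRange a
      · intro _; exact ⟨π.symm a, List.mem_finRange _, by simp⟩
  have h2 : permList π = ((List.finRange m).map π).map (fun j : Fin m => (j : ℕ) + 1) := by
    rw [List.map_map]
    rfl
  have h3 := h1.map (fun j : Fin m => (j : ℕ) + 1)
  rw [← h2] at h3
  refine h3.trans ?_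
  have h4 : (List.finRange m).map (fun j : Fin m => (j : ℕ) + 1) = List.range' 1 m := by
    rw [List.range'_eq_map_range]
    have h5 : (List.finRange m).map (fun j : Fin m => (j : ℕ)) = List.range m := by
      apply List.ext_getElem (by simp)
      intro i h1 h2
      simp
    rw [← h5, List.map_map]
    apply List.map_congr_left
    intro a _
    simp [Nat.add_comm]
  rw [h4]

lemma permList_inj {m : ℕ} : Function.Injective (permList (m := m)) := by
  intro π1 π2 h
  unfold permList at h
  rw [List.map_inj_left] at h
  ext i
  have := h i (List.mem_finRange i)
  omega

lemma exists_perm_of {m : ℕ} (l : List ℕ) (hperm : l.Perm (List.range' 1 m)) :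
    ∃ π : Equiv.Perm (Fin m), permList π = l := by
  have hl : l.length = m := by
    have := hperm.length_eq
    simpa using this
  subst hl
  have hnd : l.Nodup := hperm.nodup_iff.2 List.nodup_range'
  have hbound : ∀ a ∈ l, 1 ≤ a ∧ a < l.length + 1 := by
    intro a ha
    have := hperm.mem_iff.1 ha
    exact ⟨range'_pos this, range'_lt this⟩
  have hf : ∀ i : Fin l.length, l[(i : ℕ)] - 1 < l.length := by
    intro i
    have := hbound l[(i : ℕ)] (List.getElem_mem i.isLt)
    omega
  set f : Fin l.length → Fin l.length := fun i => ⟨l[(i : ℕ)] - 1, hf i⟩ with hfdef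
  have hinj : Function.Injective f := by
    intro i j h
    have h1 := hbound l[(i : ℕ)] (List.getElem_mem i.isLt)
    have h2 := hbound l[(j : ℕ)] (List.getElem_mem j.isLt)
    have h3 : l[(i : ℕ)] - 1 = l[(j : ℕ)] - 1 := congrArg Fin.val h
    have h4 : l[(i : ℕ)] = l[(j : ℕ)] := by omega
    exact Fin.val_injective (hnd.getElem_inj_iff.1 h4)
  refine ⟨Equiv.ofBijective f (Finite.injective_iff_bijective.1 hinj), ?_⟩
  unfold permList
  have : ∀ i : Fin l.length, ((Equiv.ofBijective f (Finite.injective_iff_bijective.1 hinj)) i : ℕ) + 1 = l.get i := by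
    intro i
    have h1 := hbound l[(i : ℕ)] (List.getElem_mem i.isLt)
    show (f i : ℕ) + 1 = l.get i
    simp only [hfdef]
    rw [List.get_eq_getElem]
    omega
  exact (List.map_congr_left (fun a _ => this a)).trans (List.map_get_finRange l)

end RSK

/-- **RSK Correspondence.** The RSK map is a bijection between permutations of
`[m]` and pairs `(P, Q)` of standard Young tableaux with entries `[m]` having
the same shape: it is injective, and its range is exactly the set of such pairs. -/
theorem rsk_bijection (m : ℕ) :
    Function.Injective (fun π : Equiv.Perm (Fin m) => rskPQ (permList π)) ∧
    Set.range (fun π : Equiv.Perm (Fin m) => rskPQ (permList π)) =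
      {PQ : List (List ℕ) × List (List ℕ) |
        isSYT m PQ.1 ∧ isSYT m PQ.2 ∧ shapeT PQ.1 = shapeT PQ.2} := by
  constructor
  · intro π1 π2 h
    simp only at h
    apply RSK.permList_inj
    exact RSK.inj_core m _ _ (RSK.permList_nodup π1) (RSK.permList_nodup π2)
      (RSK.permList_length π1) (RSK.permList_length π2) h
  · ext PQ
    simp only [Set.mem_range, Set.mem_setOf_eq]
    constructor
    · rintro ⟨π, rfl⟩
      have hnd := RSK.permList_nodup π
      have g := RSK.good_fold (permList π) hnd
      have hpm := RSK.permList_perm π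
      have hre : List.range' 1 (permList π).length = List.range' 1 m := by
        rw [RSK.permList_length]
      refine ⟨?_, ?_, g.shape⟩
      · rw [RSK.isSYT_iff]
        exact ⟨g.tabP, g.permP.trans ((List.reverse_perm _).trans hpm)⟩
      · rw [RSK.isSYT_iff]
        exact ⟨g.tabQ, g.permQ.trans (hre ▸ List.Perm.refl _)⟩
    · rintro ⟨h1, h2, h3⟩
      rw [RSK.isSYT_iff] at h1 h2
      have hndP : PQ.1.flatten.Nodup := h1.2.nodup_iff.2 List.nodup_range'
      obtain ⟨l, hnd, hlen, hpermP, hfold⟩ := RSK.sur_core m PQ.1 PQ.2 h1.1 hndP h2.1 h2.2 h3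
      have hlr : l.Perm (List.range' 1 m) := hpermP.trans h1.2
      obtain ⟨π, hπ⟩ := RSK.exists_perm_of l hlr
      exact ⟨π, by show rskPQ (permList π) = PQ; rw [hπ]; exact hfold⟩
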